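/- arXiv:1101.5846 — 2 statements merged into one kernel-verified Lean document; each statement's English description precedes it below -/
import Mathlib

section
/- Let δ be a positive root of 𝔤 and suppose δ = δ_1 + δ_2 + ⋯ + δ_n, where each δ_i is a simple positive root of 𝔤 (repetitions among the δ_i are allowed) and n > 1. Then (δ, δ) < Σ_{i=1}^{n} (δ_i, δ_i). -/
open scoped RealInnerProductSpace

/-- An (abstract) reduced irreducible root system in a finite-dimensional real inner
product space, together with a chosen base (set of simple roots) and the highest root,
with the inner product normalized so that `⟪θ, θ⟫ = 2`.  This encodes the root data of a
finite-dimensional simple complex Lie algebra `𝔤` with the normalized Killing form. -/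
structure SimpleRootSystem (V : Type*) [NormedAddCommGroup V] [InnerProductSpace ℝ V]
    [FiniteDimensional ℝ V] where
  /-- the set of roots Δ -/
  Δ : Finset V
  /-- the set of simple roots R -/
  R : Finset V
  /-- the highest root θ -/
  θ : V
  zero_not_mem : (0 : V) ∉ Δ
  spans : Submodule.span ℝ (Δ : Set V) = ⊤
  cartan_int : ∀ α ∈ Δ, ∀ β ∈ Δ, ∃ m : ℤ, 2 * ⟪β, α⟫ / ⟪α, α⟫ = (m : ℝ)
  reflect_mem : ∀ α ∈ Δ, ∀ β ∈ Δ, β - (2 * ⟪β, α⟫ / ⟪α, α⟫) • α ∈ Δ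
  reduced : ∀ α ∈ Δ, ∀ c : ℝ, c • α ∈ Δ → c = 1 ∨ c = -1
  irreducible : ∀ S T : Set V, (Δ : Set V) = S ∪ T →
    (∀ α ∈ S, ∀ β ∈ T, ⟪α, β⟫ = 0) → S = ∅ ∨ T = ∅
  base_subset : R ⊆ Δ
  base_indep : LinearIndependent ℝ (fun α : {x // x ∈ R} => (α : V))
  root_decomp : ∀ δ ∈ Δ, ∃ c : {x // x ∈ R} → ℤ,
    (δ = ∑ α ∈ R.attach, (c α : ℝ) • (α : V)) ∧ ((∀ α, 0 ≤ c α) ∨ (∀ α, c α ≤ 0))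
  highest_mem : θ ∈ Δ
  highest : ∀ δ ∈ Δ, ∃ c : {x // x ∈ R} → ℕ,
    θ - δ = ∑ α ∈ R.attach, (c α : ℝ) • (α : V)
  norm_theta : ⟪θ, θ⟫ = 2

variable {V : Type*} [NormedAddCommGroup V] [InnerProductSpace ℝ V] [FiniteDimensional ℝ V]

/-- A positive root: a root which is a nonnegative integral combination of simple roots. -/
def SimpleRootSystem.IsPositiveRoot (S : SimpleRootSystem V) (δ : V) : Prop :=
  δ ∈ S.Δ ∧ ∃ c : {x // x ∈ S.R} → ℕ, δ = ∑ α ∈ S.R.attach, (c α : ℝ) • (α : V)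

lemma key_lemma (S : SimpleRootSystem V) :
    ∀ N : ℕ, ∀ δ, δ ∈ S.Δ → ∀ c : {x // x ∈ S.R} → ℕ,
      δ = ∑ γ ∈ S.R.attach, (c γ : ℝ) • (γ : V) →
      (∑ γ ∈ S.R.attach, c γ) = N →
      ⟪δ, δ⟫ ≤ ∑ γ ∈ S.R.attach, (c γ : ℝ) * ⟪(γ : V), (γ : V)⟫ ∧
        (2 ≤ N → ⟪δ, δ⟫ < ∑ γ ∈ S.R.attach, (c γ : ℝ) * ⟪(γ : V), (γ : V)⟫) := by
  classical
  intro N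
  induction N using Nat.strong_induction_on with
  | _ N IH =>
  intro δ hδ c hrep hsum
  have hδne : δ ≠ 0 := fun h => S.zero_not_mem (h ▸ hδ)
  have hδδ : (0 : ℝ) < ⟪δ, δ⟫ := by
    rw [real_inner_self_eq_norm_sq]
    exact pow_pos (norm_pos_iff.mpr hδne) 2
  have hN0 : N ≠ 0 := by
    rintro rfl
    apply hδne
    rw [hrep]
    refine Finset.sum_eq_zero fun γ hγ => ?_
    have : c γ = 0 := by
      have := Finset.sum_eq_zero_iff.mp hsum γ hγ
      exact this
    simp [this]
  rcases lt_or_ge N 2 with hN2 | hN2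
  · -- N = 1 : equality case
    have hN1 : N = 1 := by omega
    subst hN1
    obtain ⟨α, hαm, hα⟩ := Finset.exists_ne_zero_of_sum_ne_zero (f := c)
      (by rw [hsum]; exact one_ne_zero)
    have hα1 : c α = 1 := by
      have h1 : c α ≤ 1 := hsum ▸ Finset.single_le_sum (fun _ _ => Nat.zero_le _) hαm
      omega
    have hrest : ∀ γ ∈ S.R.attach.erase α, c γ = 0 := by
      have := Finset.add_sum_erase S.R.attach c hαm
      rw [hsum, hα1] at this
      intro γ hγ
      have h0 : ∑ γ ∈ S.R.attach.erase α, c γ = 0 := by omega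
      exact Finset.sum_eq_zero_iff.mp h0 γ hγ
    have hδα : δ = (α : V) := by
      rw [hrep, ← Finset.add_sum_erase _ _ hαm, hα1]
      rw [Finset.sum_eq_zero (fun γ hγ => by simp [hrest γ hγ])]
      simp
    have hRHS : ∑ γ ∈ S.R.attach, (c γ : ℝ) * ⟪(γ : V), (γ : V)⟫ = ⟪(α : V), (α : V)⟫ := by
      rw [← Finset.add_sum_erase _ _ hαm, hα1]
      rw [Finset.sum_eq_zero (fun γ hγ => by simp [hrest γ hγ])]
      simp
    constructor
    · rw [hδα, hRHS]
    · omega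
  · -- N ≥ 2 : inductive step
    -- pick a simple root α with c α * ⟪α, δ⟫ > 0
    have hsum_inner : ⟪δ, δ⟫ = ∑ γ ∈ S.R.attach, (c γ : ℝ) * ⟪(γ : V), δ⟫ := by
      nth_rewrite 1 [hrep]
      rw [sum_inner]
      exact Finset.sum_congr rfl fun γ _ => real_inner_smul_left _ _ _
    obtain ⟨α, hαm, hα⟩ : ∃ α ∈ S.R.attach, 0 < (c α : ℝ) * ⟪(α : V), δ⟫ := by
      by_contra h
      push_neg at h
      have := Finset.sum_nonpos (f := fun γ : {x // x ∈ S.R} => (c γ : ℝ) * ⟪(γ : V), δ⟫)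
        (s := S.R.attach) (fun γ hγ => h γ hγ)
      rw [← hsum_inner] at this
      linarith
    have hαΔ : (α : V) ∈ S.Δ := S.base_subset α.2
    have hαne : (α : V) ≠ 0 := fun h => S.zero_not_mem (h ▸ hαΔ)
    have hs : (0 : ℝ) < ⟪(α : V), (α : V)⟫ := by
      rw [real_inner_self_eq_norm_sq]
      exact pow_pos (norm_pos_iff.mpr hαne) 2
    have ht : (0 : ℝ) < ⟪δ, (α : V)⟫ := by
      rw [real_inner_comm]
      rcases (mul_pos_iff.mp hα) with ⟨_, h2⟩ | ⟨h1, _⟩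
      · exact h2
      · exact absurd h1 (not_lt.mpr (by positivity))
    obtain ⟨m, hm⟩ := S.cartan_int (α : V) hαΔ δ hδ
    have hm1 : 1 ≤ m := by
      have hmm : (0 : ℝ) < (m : ℝ) := by
        rw [← hm]; exact div_pos (by linarith) hs
      have : (0 : ℤ) < m := by exact_mod_cast hmm
      omega
    have h2t : 2 * ⟪δ, (α : V)⟫ = (m : ℝ) * ⟪(α : V), (α : V)⟫ := by
      rw [div_eq_iff (ne_of_gt hs)] at hm
      linarith
    set δ' : V := δ - (m : ℝ) • (α : V) with hδ'def
    have hδ'Δ : δ' ∈ S.Δ := by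
      have := S.reflect_mem (α : V) hαΔ δ hδ
      rwa [hm] at this
    obtain ⟨e, hrep_e, hsign⟩ := S.root_decomp δ' hδ'Δ
    -- coefficient comparison via linear independence
    have hcoeff : ∀ γ : {x // x ∈ S.R},
        (e γ : ℝ) = (c γ : ℝ) - (if γ = α then (m : ℝ) else 0) := by
      have hzero : ∑ γ : {x // x ∈ S.R},
          ((e γ : ℝ) - ((c γ : ℝ) - (if γ = α then (m : ℝ) else 0))) • (γ : V) = 0 := by
        have hattach : S.R.attach = (Finset.univ : Finset {x // x ∈ S.R}) :=
          Finset.attach_eq_univ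
        rw [← hattach]
        have hsplit : ∑ γ ∈ S.R.attach,
            ((e γ : ℝ) - ((c γ : ℝ) - (if γ = α then (m : ℝ) else 0))) • (γ : V)
            = (∑ γ ∈ S.R.attach, (e γ : ℝ) • (γ : V))
              - (∑ γ ∈ S.R.attach, (c γ : ℝ) • (γ : V))
              + ∑ γ ∈ S.R.attach, (if γ = α then (m : ℝ) else 0) • (γ : V) := by
          rw [← Finset.sum_sub_distrib, ← Finset.sum_add_distrib]
          refine Finset.sum_congr rfl fun γ _ => ?_
          rw [sub_smul, sub_smul]
          abel
        rw [hsplit, ← hrep_e, ← hrep]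
        have : ∑ γ ∈ S.R.attach, (if γ = α then (m : ℝ) else 0) • (γ : V)
            = (m : ℝ) • (α : V) := by
          rw [Finset.sum_eq_single α]
          · simp
          · intro γ _ hne; simp [hne]
          · intro h; exact absurd (Finset.mem_attach _ _) h
        rw [this, hδ'def]
        abel
      intro γ
      have := (Fintype.linearIndependent_iff.mp S.base_indep) _ hzero γ
      linarith [this]
    rcases hsign with hpos | hneg
    · -- all e ≥ 0 : descend
      have hmα : m ≤ (c α : ℤ) := by
        have h1 := hcoeff α
        simp only [if_pos rfl] at h1
        have h3 : (e α : ℤ) = (c α : ℤ) - m := by exact_mod_cast h1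
        have := hpos α
        omega
      set k : ℕ := m.toNat with hkdef
      have hkm : (k : ℤ) = m := Int.toNat_of_nonneg (by omega)
      have hk1 : 1 ≤ k := by omega
      have hkc : k ≤ c α := by omega
      set c' : {x // x ∈ S.R} → ℕ := fun γ => if γ = α then c α - k else c γ with hc'def
      have hkmR : ((k : ℕ) : ℝ) = (m : ℝ) := by exact_mod_cast hkm
      have hc'cast : ∀ γ, (e γ : ℝ) = (c' γ : ℝ) := by
        intro γ
        by_cases hγ : γ = α
        · subst hγ
          have h4 : c' γ = c γ - k := by simp [hc'def]
          rw [hcoeff γ, if_pos rfl, h4, Nat.cast_sub hkc, hkmR]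
        · have h4 : c' γ = c γ := by simp [hc'def, hγ]
          rw [hcoeff γ, if_neg hγ, h4]
          ring
      have hrep' : δ' = ∑ γ ∈ S.R.attach, (c' γ : ℝ) • (γ : V) := by
        rw [hrep_e]
        exact Finset.sum_congr rfl fun γ _ => by rw [hc'cast γ]
      have hsum'k : (∑ γ ∈ S.R.attach, c' γ) + k = N := by
        have h1 := Finset.add_sum_erase S.R.attach c hαm
        have h2 := Finset.add_sum_erase S.R.attach c' hαm
        have h3 : ∑ γ ∈ S.R.attach.erase α, c' γ = ∑ γ ∈ S.R.attach.erase α, c γ := by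
          refine Finset.sum_congr rfl fun γ hγ => ?_
          rw [hc'def]
          simp [Finset.ne_of_mem_erase hγ]
        have h4 : c' α = c α - k := by rw [hc'def]; simp
        omega
      set N' : ℕ := ∑ γ ∈ S.R.attach, c' γ with hN'def
      have hN'lt : N' < N := by omega
      have hIH := IH N' hN'lt δ' hδ'Δ c' hrep' rfl
      -- isometry : ⟪δ', δ'⟫ = ⟪δ, δ⟫
      have hiso : ⟪δ', δ'⟫ = ⟪δ, δ⟫ := by
        rw [hδ'def, inner_sub_sub_self]
        simp only [real_inner_smul_left, real_inner_smul_right]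
        rw [real_inner_comm (α : V) δ]
        linear_combination (-(m : ℝ)) * h2t + (2 * (m : ℝ)) * real_inner_comm (α : V) δ
      have hsplit : ∑ γ ∈ S.R.attach, (c γ : ℝ) * ⟪(γ : V), (γ : V)⟫
          = (∑ γ ∈ S.R.attach, (c' γ : ℝ) * ⟪(γ : V), (γ : V)⟫)
            + (k : ℝ) * ⟪(α : V), (α : V)⟫ := by
        rw [← Finset.add_sum_erase _ (fun γ => (c γ : ℝ) * ⟪(γ : V), (γ : V)⟫) hαm,
          ← Finset.add_sum_erase _ (fun γ => (c' γ : ℝ) * ⟪(γ : V), (γ : V)⟫) hαm]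
        have h3 : ∑ γ ∈ S.R.attach.erase α, (c' γ : ℝ) * ⟪(γ : V), (γ : V)⟫
            = ∑ γ ∈ S.R.attach.erase α, (c γ : ℝ) * ⟪(γ : V), (γ : V)⟫ := by
          refine Finset.sum_congr rfl fun γ hγ => ?_
          have : c' γ = c γ := by simp [hc'def, Finset.ne_of_mem_erase hγ]
          rw [this]
        rw [h3]
        have h4 : (c α : ℝ) = (c' α : ℝ) + (k : ℝ) := by
          have h5 : c' α = c α - k := by simp [hc'def]
          rw [h5, Nat.cast_sub hkc]
          ring
        rw [h4]
        ring
      have hks : (0 : ℝ) < (k : ℝ) * ⟪(α : V), (α : V)⟫ := by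
        have : (0 : ℝ) < (k : ℝ) := by exact_mod_cast hk1
        exact mul_pos this hs
      have hstrict : ⟪δ, δ⟫ < ∑ γ ∈ S.R.attach, (c γ : ℝ) * ⟪(γ : V), (γ : V)⟫ := by
        have h5 := hIH.1
        rw [hiso] at h5
        rw [hsplit]
        linarith
      exact ⟨le_of_lt hstrict, fun _ => hstrict⟩
    · -- all e ≤ 0 : δ is a multiple of α, contradiction with N ≥ 2
      have hczero : ∀ γ : {x // x ∈ S.R}, γ ≠ α → c γ = 0 := by
        intro γ hγ
        have h1 := hcoeff γ
        simp only [if_neg hγ] at h1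
        rw [sub_zero] at h1
        have h2 : (e γ : ℤ) = (c γ : ℤ) := by exact_mod_cast h1
        have := hneg γ
        omega
      have hδcα : δ = ((c α : ℕ) : ℝ) • (α : V) := by
        rw [hrep, ← Finset.add_sum_erase _ _ hαm]
        rw [Finset.sum_eq_zero (fun γ hγ => by
          simp [hczero γ (Finset.ne_of_mem_erase hγ)])]
        simp
      have := S.reduced (α : V) hαΔ ((c α : ℕ) : ℝ) (by rw [← hδcα]; exact hδ)
      have hcα1 : c α = 1 := by
        rcases this with h | h
        · exact_mod_cast h
        · exfalso
          have : (0:ℝ) ≤ ((c α : ℕ) : ℝ) := by positivity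
          rw [h] at this; linarith
      have : N = 1 := by
        have h1 := Finset.add_sum_erase S.R.attach c hαm
        have h0 : ∑ γ ∈ S.R.attach.erase α, c γ = 0 :=
          Finset.sum_eq_zero (fun γ hγ => hczero γ (Finset.ne_of_mem_erase hγ))
        omega
      omega

/-- **Reformulation of Lemma 4.1.**  If a positive root `δ` of `𝔤` is written as
`δ = δ₁ + ⋯ + δₙ` with each `δᵢ` a simple root (repetitions allowed) and `n > 1`, then
`(δ, δ) < ∑ᵢ (δᵢ, δᵢ)`. -/
theorem inner_self_lt_sum_inner_self_simple_roots
    (S : SimpleRootSystem V) (δ : V) (hδ : S.IsPositiveRoot δ)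
    (n : ℕ) (hn : 1 < n) (d : Fin n → V) (hd : ∀ i, d i ∈ S.R)
    (hsum : δ = ∑ i, d i) :
    ⟪δ, δ⟫ < ∑ i, ⟪d i, d i⟫ := by
  classical
  set D : Fin n → {x // x ∈ S.R} := fun i => ⟨d i, hd i⟩ with hD
  set c : {x // x ∈ S.R} → ℕ :=
    fun γ => (Finset.univ.filter fun i => D i = γ).card with hc
  have hattach : S.R.attach = (Finset.univ : Finset {x // x ∈ S.R}) :=
    Finset.attach_eq_univ
  have hcsum : ∑ γ ∈ S.R.attach, c γ = n := by
    have h1 : (Finset.univ : Finset (Fin n)).card = ∑ γ : {x // x ∈ S.R}, c γ :=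
      Finset.card_eq_sum_card_fiberwise (fun x _ => Finset.mem_univ _)
    rw [hattach, ← h1, Finset.card_univ, Fintype.card_fin]
  have hrep : δ = ∑ γ ∈ S.R.attach, (c γ : ℝ) • (γ : V) := by
    have hfib := Finset.sum_fiberwise (Finset.univ : Finset (Fin n)) D (fun i => (D i : V))
    rw [hattach, hsum]
    have h2 : ∑ i, d i = ∑ i, ((D i : V)) := rfl
    rw [h2, ← hfib]
    refine Finset.sum_congr rfl fun γ _ => ?_
    have h3 : ∑ i ∈ Finset.univ.filter (fun i => D i = γ), (D i : V)
        = ∑ _i ∈ Finset.univ.filter (fun i => D i = γ), (γ : V) := by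
      refine Finset.sum_congr rfl fun i hi => ?_
      rw [(Finset.mem_filter.mp hi).2]
    rw [h3, Finset.sum_const, Nat.cast_smul_eq_nsmul]
  have hinner : ∑ i, ⟪d i, d i⟫ = ∑ γ ∈ S.R.attach, (c γ : ℝ) * ⟪(γ : V), (γ : V)⟫ := by
    have hfib := Finset.sum_fiberwise (Finset.univ : Finset (Fin n)) D
      (fun i => (⟪(D i : V), (D i : V)⟫ : ℝ))
    have h2 : ∑ i, ⟪d i, d i⟫ = ∑ i, (⟪(D i : V), (D i : V)⟫ : ℝ) := rfl
    rw [hattach, h2, ← hfib]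
    refine Finset.sum_congr rfl fun γ _ => ?_
    have h3 : ∑ i ∈ Finset.univ.filter (fun i => D i = γ), (⟪(D i : V), (D i : V)⟫ : ℝ)
        = ∑ _i ∈ Finset.univ.filter (fun i => D i = γ), (⟪(γ : V), (γ : V)⟫ : ℝ) := by
      refine Finset.sum_congr rfl fun i hi => ?_
      rw [(Finset.mem_filter.mp hi).2]
    rw [h3, Finset.sum_const, nsmul_eq_mul]
  rw [hinner]
  exact (key_lemma S n δ hδ.1 c hrep hcsum).2 hn
end

section
/- Let δ be a positive root of 𝔤 and suppose δ = δ_1 + δ_2 + ⋯ + δ_s, where each δ_i is a simple positive root of 𝔤 (repetitions among the δ_i are allowed). Then Σ_{i=1}^{s} (δ_i, δ_i) < 2g*, where g* is the dual Coxeter number of 𝔤. Equivalently (without reference to g*): writing the highest root as θ = Σ_{α ∈ R} b_α α with positive integer marks b_α, one has Σ_{i=1}^{s} (δ_i, δ_i) < (θ, θ) + Σ_{α ∈ R} b_α (α, α). -/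
open scoped RealInnerProductSpace

variable {V : Type*} [NormedAddCommGroup V] [InnerProductSpace ℝ V] [FiniteDimensional ℝ V]

open scoped Classical in
set_option linter.unusedSectionVars false in
lemma fiber_sum_aux {s : ℕ} (R : Finset V) (d : Fin s → V) (hd : ∀ i, d i ∈ R)
    {M : Type*} [AddCommMonoid M] [Module ℝ M] (f : V → M) :
    ∑ i, f (d i) = ∑ α ∈ R.attach,
      (((Finset.univ.filter fun i => d i = (α : V)).card : ℝ)) • f (α : V) := by
  classical
  rw [← Finset.sum_fiberwise_of_maps_to
    (g := fun i => (⟨d i, hd i⟩ : {x // x ∈ R}))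
    (fun i _ => Finset.mem_attach _ _) (fun i => f (d i))]
  refine Finset.sum_congr rfl fun α _ => ?_
  have h1 : (Finset.univ.filter fun i => (⟨d i, hd i⟩ : {x // x ∈ R}) = α)
      = Finset.univ.filter fun i => d i = (α : V) := by
    apply Finset.filter_congr; intro i _; simp [Subtype.ext_iff]
  rw [h1]
  have h2 : ∀ i ∈ Finset.univ.filter fun i => d i = (α : V), f (d i) = f (α : V) := by
    intro i hi; rw [(Finset.mem_filter.mp hi).2]
  rw [Finset.sum_congr rfl h2, Finset.sum_const, ← Nat.cast_smul_eq_nsmul ℝ]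

/-- **Lemma 6.1.**  If a positive root `δ` of `𝔤` is written as `δ = δ₁ + ⋯ + δ_s` with each
`δᵢ` a simple root (repetitions allowed), then `∑ᵢ (δᵢ, δᵢ) < 2g*`, where `g*` is the dual
Coxeter number of `𝔤` (here `g* = 1 + ∑_α b∨_α`, the comarks `b∨_α` being defined by
`θ∨ = ∑_α b∨_α α∨` with `α∨ = 2α/(α,α)`).  Equivalently, without reference to `g*`: writing
`θ = ∑_α b_α α` with the marks `b_α`, one has `∑ᵢ (δᵢ, δᵢ) < (θ,θ) + ∑_α b_α (α,α)`. -/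
theorem sum_inner_self_simple_roots_lt_two_dual_coxeter
    (S : SimpleRootSystem V) (δ : V) (hδ : S.IsPositiveRoot δ)
    (s : ℕ) (d : Fin s → V) (hd : ∀ i, d i ∈ S.R)
    (hsum : δ = ∑ i, d i)
    -- the marks b_α : θ = ∑_α b_α α
    (b : {x // x ∈ S.R} → ℕ)
    (hb : S.θ = ∑ α ∈ S.R.attach, (b α : ℝ) • (α : V))
    -- the comarks b∨_α : θ∨ = ∑_α b∨_α α∨, where α∨ = (2/(α,α)) α
    (bv : {x // x ∈ S.R} → ℕ)
    (hbv : (2 / ⟪S.θ, S.θ⟫) • S.θ =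
      ∑ α ∈ S.R.attach, (bv α : ℝ) • ((2 / ⟪(α : V), (α : V)⟫) • (α : V)))
    -- the dual Coxeter number g* = 1 + ∑_α b∨_α
    (gstar : ℝ) (hg : gstar = 1 + ∑ α ∈ S.R.attach, (bv α : ℝ)) :
    (∑ i, ⟪d i, d i⟫ < 2 * gstar) ∧
    (∑ i, ⟪d i, d i⟫ < ⟪S.θ, S.θ⟫ + ∑ α ∈ S.R.attach, (b α : ℝ) * ⟪(α : V), (α : V)⟫) := by
  classical
  set n : {x // x ∈ S.R} → ℕ :=
    fun α => (Finset.univ.filter fun i => d i = (α : V)).card with hn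
  have hδn : δ = ∑ α ∈ S.R.attach, ((n α : ℝ)) • (α : V) := by
    rw [hsum]; simpa using fiber_sum_aux S.R d hd id
  have hIn : ∑ i, ⟪d i, d i⟫ = ∑ α ∈ S.R.attach, (n α : ℝ) * ⟪(α : V), (α : V)⟫ := by
    simpa [smul_eq_mul] using fiber_sum_aux S.R d hd (fun v => ⟪v, v⟫)
  obtain ⟨c, hc⟩ := S.highest δ hδ.1
  have hli := Fintype.linearIndependent_iff.mp S.base_indep
  have key : ∀ α, (b α : ℝ) = (n α : ℝ) + (c α : ℝ) := by
    have hz : ∑ α : {x // x ∈ S.R},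
        ((b α : ℝ) - (n α : ℝ) - (c α : ℝ)) • (α : V) = 0 := by
      rw [Finset.univ_eq_attach]
      simp only [sub_smul, Finset.sum_sub_distrib]
      rw [← hb, ← hδn, ← hc]; abel
    intro α
    have h := hli _ hz α
    have : (b α : ℝ) - (n α : ℝ) - (c α : ℝ) = 0 := h
    linarith
  have hαα : ∀ α : {x // x ∈ S.R}, (0:ℝ) ≤ ⟪(α : V), (α : V)⟫ :=
    fun α => real_inner_self_nonneg
  have hmain : ∑ i, ⟪d i, d i⟫ ≤ ∑ α ∈ S.R.attach, (b α : ℝ) * ⟪(α : V), (α : V)⟫ := by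
    rw [hIn]
    apply Finset.sum_le_sum
    intro α _
    have hnb : (n α : ℝ) ≤ (b α : ℝ) := by
      have := key α; have : (c α : ℝ) ≥ 0 := Nat.cast_nonneg _; linarith [key α]
    exact mul_le_mul_of_nonneg_right hnb (hαα α)
  have second : ∑ i, ⟪d i, d i⟫ <
      ⟪S.θ, S.θ⟫ + ∑ α ∈ S.R.attach, (b α : ℝ) * ⟪(α : V), (α : V)⟫ := by
    rw [S.norm_theta]; linarith
  refine ⟨?_, second⟩
  -- show 2 * gstar = ⟪θ,θ⟫ + ∑ b α ⟪α,α⟫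
  have hne : ∀ α : {x // x ∈ S.R}, ⟪(α : V), (α : V)⟫ ≠ 0 := by
    intro α h
    have h0 : (α : V) = 0 := inner_self_eq_zero.mp h
    exact S.zero_not_mem (h0 ▸ S.base_subset α.2)
  have key2 : ∀ α : {x // x ∈ S.R}, (b α : ℝ) * ⟪(α : V), (α : V)⟫ = 2 * (bv α : ℝ) := by
    have hθ : S.θ = ∑ α ∈ S.R.attach,
        ((bv α : ℝ) * (2 / ⟪(α : V), (α : V)⟫)) • (α : V) := by
      have := hbv
      rw [S.norm_theta] at this
      norm_num at this
      rw [this]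
      exact Finset.sum_congr rfl fun α _ => by rw [smul_smul, real_inner_self_eq_norm_sq]
    have hz : ∑ α : {x // x ∈ S.R},
        ((b α : ℝ) - (bv α : ℝ) * (2 / ⟪(α : V), (α : V)⟫)) • (α : V) = 0 := by
      rw [Finset.univ_eq_attach]
      simp only [sub_smul, Finset.sum_sub_distrib]
      rw [← hb, ← hθ]; abel
    intro α
    have h := hli _ hz α
    have h' : (b α : ℝ) = (bv α : ℝ) * (2 / ⟪(α : V), (α : V)⟫) := by
      have : (b α : ℝ) - (bv α : ℝ) * (2 / ⟪(α : V), (α : V)⟫) = 0 := h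
      linarith
    rw [h']
    field_simp
    rw [mul_div_assoc, div_self (hne α), mul_one]
  have hsum2 : ∑ α ∈ S.R.attach, (b α : ℝ) * ⟪(α : V), (α : V)⟫
      = 2 * ∑ α ∈ S.R.attach, (bv α : ℝ) := by
    rw [Finset.mul_sum]
    exact Finset.sum_congr rfl fun α _ => key2 α
  have : 2 * gstar = ⟪S.θ, S.θ⟫ + ∑ α ∈ S.R.attach, (b α : ℝ) * ⟪(α : V), (α : V)⟫ := by
    rw [hg, hsum2, S.norm_theta]; ring
  linarith
end
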